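/- arXiv:1507.06919 — 2 statements merged into one kernel-verified Lean document; each statement's English description precedes it below -/
import Mathlib

section
/- If G is χψ-perfect, then G is (C₄, P₄, P₃∪K₂, 3K₂)-free. -/
open SimpleGraph

/-- A coloring of the vertices with colors `0, ..., k-1` which uses all `k` colors and such
that every pair of distinct colors appears on the endpoints of some edge. -/
def IsCompleteColoring {V : Type*} (G : SimpleGraph V) (c : V → ℕ) (k : ℕ) : Prop :=
  (∀ v, c v < k) ∧ (∀ i, i < k → ∃ v, c v = i) ∧
    ∀ i j, i < k → j < k → i ≠ j → ∃ u w, G.Adj u w ∧ c u = i ∧ c w = j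

/-- A proper coloring: adjacent vertices get distinct colors. -/
def IsProperColoring {V : Type*} (G : SimpleGraph V) (c : V → ℕ) : Prop :=
  ∀ u w, G.Adj u w → c u ≠ c w

/-- A Grundy coloring with `k` colors: proper, uses all `k` colors, and every vertex of
color `j` has, for each `i < j`, a neighbor colored `i`. -/
def IsGrundyColoring {V : Type*} (G : SimpleGraph V) (c : V → ℕ) (k : ℕ) : Prop :=
  (∀ v, c v < k) ∧ (∀ i, i < k → ∃ v, c v = i) ∧ IsProperColoring G c ∧
    ∀ v i, i < c v → ∃ u, G.Adj u v ∧ c u = i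

/-- The pseudoachromatic number `ψ`. -/
noncomputable def pseudoachromaticNumber {V : Type*} (G : SimpleGraph V) : ℕ :=
  sSup {k | ∃ c, IsCompleteColoring G c k}

/-- The achromatic number `α`. -/
noncomputable def achromaticNumber {V : Type*} (G : SimpleGraph V) : ℕ :=
  sSup {k | ∃ c, IsCompleteColoring G c k ∧ IsProperColoring G c}

/-- The Grundy number `Γ`. -/
noncomputable def grundyNumber {V : Type*} (G : SimpleGraph V) : ℕ :=
  sSup {k | ∃ c, IsGrundyColoring G c k}

/-- The chromatic number `χ` (as a natural number). -/
noncomputable def chromNumber {V : Type*} (G : SimpleGraph V) : ℕ :=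
  sInf {k | ∃ c : V → ℕ, (∀ v, c v < k) ∧ IsProperColoring G c}

/-- The clique number `ω`. -/
noncomputable def cliqueNumber {V : Type*} (G : SimpleGraph V) : ℕ :=
  sSup {n | ∃ s : Finset V, G.IsNClique n s}

/-- `G` is `H`-free: no induced subgraph of `G` is isomorphic to `H`. -/
def GraphFree {V W : Type*} (G : SimpleGraph V) (H : SimpleGraph W) : Prop :=
  ∀ s : Set V, IsEmpty ((G.induce s) ≃g H)

/-- `G` is `ωψ`-perfect. -/
def OmegaPsiPerfect {V : Type*} (G : SimpleGraph V) : Prop :=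
  ∀ s : Set V, cliqueNumber (G.induce s) = pseudoachromaticNumber (G.induce s)

/-- `G` is `χψ`-perfect. -/
def ChiPsiPerfect {V : Type*} (G : SimpleGraph V) : Prop :=
  ∀ s : Set V, chromNumber (G.induce s) = pseudoachromaticNumber (G.induce s)

/-- The path on 4 vertices. -/
def pathP4 : SimpleGraph (Fin 4) :=
  SimpleGraph.fromRel (fun a b => (b : ℕ) = (a : ℕ) + 1)

/-- The cycle on 4 vertices. -/
def cycleC4 : SimpleGraph (Fin 4) :=
  SimpleGraph.fromRel (fun a b => b = a + 1)

/-- The disjoint union of a path on 3 vertices and an edge. -/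
def graphP3K2 : SimpleGraph (Fin 5) :=
  SimpleGraph.fromRel (fun a b => (a, b) ∈ [((0 : Fin 5), (1 : Fin 5)), (1, 2), (3, 4)])

/-- The disjoint union of three edges. -/
def graph3K2 : SimpleGraph (Fin 6) :=
  SimpleGraph.fromRel (fun a b => (a, b) ∈ [((0 : Fin 6), (1 : Fin 6)), (2, 3), (4, 5)])

/-- The join of two graphs. -/
def graphJoin {V W : Type*} (G : SimpleGraph V) (H : SimpleGraph W) : SimpleGraph (V ⊕ W) :=
  SimpleGraph.fromRel (fun x y =>
    match x, y with
    | Sum.inl a, Sum.inl b => G.Adj a b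
    | Sum.inr a, Sum.inr b => H.Adj a b
    | _, _ => True)

/-- The disjoint union of two graphs. -/
def graphSum {V W : Type*} (G : SimpleGraph V) (H : SimpleGraph W) : SimpleGraph (V ⊕ W) :=
  SimpleGraph.fromRel (fun x y =>
    match x, y with
    | Sum.inl a, Sum.inl b => G.Adj a b
    | Sum.inr a, Sum.inr b => H.Adj a b
    | _, _ => False)

/-- The disjoint union of a family of graphs. -/
def graphSigma {ι : Type} {U : ι → Type} (f : ∀ i, SimpleGraph (U i)) :
    SimpleGraph (Σ i, U i) :=
  SimpleGraph.fromRel (fun x y => ∃ h : x.1 = y.1, (f y.1).Adj (h ▸ x.2) y.2)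


instance decRelFromRel {V : Type*} [DecidableEq V] (r : V → V → Prop) [DecidableRel r] :
    DecidableRel (SimpleGraph.fromRel r).Adj := fun a b =>
  decidable_of_iff' _ (SimpleGraph.fromRel_adj r a b)

lemma isCompleteColoring_map {V W : Type*} {G : SimpleGraph V} {H : SimpleGraph W}
    (e : G ≃g H) {c : W → ℕ} {k : ℕ} (hc : IsCompleteColoring H c k) :
    IsCompleteColoring G (c ∘ e) k := by
  obtain ⟨h1, h2, h3⟩ := hc
  refine ⟨fun v => h1 _, fun i hi => ?_, fun i j hi hj hij => ?_⟩
  · obtain ⟨v, hv⟩ := h2 i hi; exact ⟨e.symm v, by simp [hv]⟩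
  · obtain ⟨u, w, huw, hu, hw⟩ := h3 i j hi hj hij
    exact ⟨e.symm u, e.symm w, e.symm.map_adj_iff.mpr huw, by simp [hu], by simp [hw]⟩

lemma psi_eq_of_iso {V W : Type*} {G : SimpleGraph V} {H : SimpleGraph W} (e : G ≃g H) :
    pseudoachromaticNumber G = pseudoachromaticNumber H := by
  unfold pseudoachromaticNumber
  congr 1
  ext k
  exact ⟨fun ⟨c, hc⟩ => ⟨c ∘ e.symm, isCompleteColoring_map e.symm hc⟩,
         fun ⟨c, hc⟩ => ⟨c ∘ e, isCompleteColoring_map e hc⟩⟩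

lemma proper_map {V W : Type*} {G : SimpleGraph V} {H : SimpleGraph W}
    (e : G ≃g H) {c : W → ℕ} (hc : IsProperColoring H c) : IsProperColoring G (c ∘ e) :=
  fun u w huw => hc (e u) (e w) (e.map_adj_iff.mpr huw)

lemma chi_eq_of_iso {V W : Type*} {G : SimpleGraph V} {H : SimpleGraph W} (e : G ≃g H) :
    chromNumber G = chromNumber H := by
  unfold chromNumber
  congr 1
  ext k
  exact ⟨fun ⟨c, hb, hc⟩ => ⟨c ∘ e.symm, fun v => hb _, proper_map e.symm hc⟩,
         fun ⟨c, hb, hc⟩ => ⟨c ∘ e, fun v => hb _, proper_map e hc⟩⟩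

lemma complete_le_card {V : Type*} [Fintype V] {G : SimpleGraph V} {c : V → ℕ} {k : ℕ}
    (hc : IsCompleteColoring G c k) : k ≤ Fintype.card V := by
  obtain ⟨-, h2, -⟩ := hc
  choose f hf using h2
  have hinj : Function.Injective (fun i : Fin k => f i i.2) := by
    intro i j hij
    simp only at hij
    have : (i : ℕ) = (j : ℕ) := by rw [← hf i i.2, ← hf j j.2, hij]
    exact Fin.ext this
  simpa using Fintype.card_le_of_injective _ hinj

lemma key_free {V : Type*} [Fintype V] {W : Type*} [Fintype W] (G : SimpleGraph V)
    (H : SimpleGraph W) (h : ChiPsiPerfect G)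
    (c2 : W → ℕ) (hc2 : (∀ v, c2 v < 2) ∧ IsProperColoring H c2)
    (c3 : W → ℕ) (hc3 : IsCompleteColoring H c3 3) :
    GraphFree G H := by
  intro s
  constructor
  intro e
  have hs := h s
  rw [chi_eq_of_iso e, psi_eq_of_iso e] at hs
  have hchi : chromNumber H ≤ 2 := Nat.sInf_le ⟨c2, hc2⟩
  have hpsi : 3 ≤ pseudoachromaticNumber H :=
    le_csSup ⟨Fintype.card W, fun k ⟨c, hc⟩ => complete_le_card hc⟩ ⟨c3, hc3⟩
  omega


instance : DecidableRel cycleC4.Adj := by unfold cycleC4; infer_instance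
instance : DecidableRel pathP4.Adj := by unfold pathP4; infer_instance
instance : DecidableRel graphP3K2.Adj := by unfold graphP3K2; infer_instance
instance : DecidableRel graph3K2.Adj := by unfold graph3K2; infer_instance

lemma complete3 {n : ℕ} (G : SimpleGraph (Fin n)) (c : Fin n → ℕ)
    (h1 : ∀ v, c v < 3) (h2 : ∀ i : Fin 3, ∃ v, c v = (i : ℕ))
    (h3 : ∀ i j : Fin 3, i ≠ j → ∃ u w, G.Adj u w ∧ c u = (i : ℕ) ∧ c w = (j : ℕ)) :
    IsCompleteColoring G c 3 := by
  refine ⟨h1, fun i hi => h2 ⟨i, hi⟩, fun i j hi hj hij => ?_⟩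
  exact h3 ⟨i, hi⟩ ⟨j, hj⟩ (fun h => hij (congrArg Fin.val h))

theorem stmt_11 {V : Type*} [Fintype V] (G : SimpleGraph V) (h : ChiPsiPerfect G) :
    GraphFree G cycleC4 ∧ GraphFree G pathP4 ∧ GraphFree G graphP3K2 ∧
      GraphFree G graph3K2 := by
  refine ⟨?_, ?_, ?_, ?_⟩
  · exact key_free G cycleC4 h ![0,1,0,1] (by unfold IsProperColoring cycleC4; decide) ![0,1,2,2] (complete3 _ ![0,1,2,2] (by decide) (by decide) (by decide))
  · exact key_free G pathP4 h ![0,1,0,1] (by unfold IsProperColoring pathP4; decide) ![0,1,2,0] (complete3 _ ![0,1,2,0] (by decide) (by decide) (by decide))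
  · exact key_free G graphP3K2 h ![0,1,0,0,1] (by unfold IsProperColoring graphP3K2; decide) ![0,1,2,0,2] (complete3 _ ![0,1,2,0,2] (by decide) (by decide) (by decide))
  · exact key_free G graph3K2 h ![0,1,0,1,0,1] (by unfold IsProperColoring graph3K2; decide) ![0,1,0,2,1,2] (complete3 _ ![0,1,0,2,1,2] (by decide) (by decide) (by decide))
end

section
/- For any graph G: G is ωψ-perfect if and only if G is χψ-perfect. -/
open SimpleGraph

section Aux

open Finset in
/-- Any complete coloring uses at most `|V|` colors. -/
lemma psi_bddAbove {V : Type*} [Fintype V] (G : SimpleGraph V) :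
    BddAbove {k | ∃ c, IsCompleteColoring G c k} := by
  refine ⟨Fintype.card V, ?_⟩
  rintro k ⟨c, _, h2, _⟩
  have hf : Function.Injective (fun i : Fin k => (h2 i i.2).choose) := by
    intro i j hij
    have hi := (h2 i i.2).choose_spec
    have hj := (h2 j j.2).choose_spec
    have hcc : c ((h2 i i.2).choose) = c ((h2 j j.2).choose) := congrArg c hij
    rw [hi, hj] at hcc
    exact Fin.ext hcc
  simpa using Fintype.card_le_of_injective _ hf

lemma omega_bddAbove {V : Type*} [Fintype V] (G : SimpleGraph V) :
    BddAbove {n | ∃ s : Finset V, G.IsNClique n s} := by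
  refine ⟨Fintype.card V, ?_⟩
  rintro n ⟨s, hs⟩
  rw [← hs.card_eq]
  simpa using Finset.card_le_univ s

lemma omega_nonempty {V : Type*} (G : SimpleGraph V) :
    (0 : ℕ) ∈ {n | ∃ s : Finset V, G.IsNClique n s} :=
  ⟨∅, by simp⟩

lemma chrom_set_nonempty {V : Type*} [Fintype V] (G : SimpleGraph V) :
    {k | ∃ c : V → ℕ, (∀ v, c v < k) ∧ IsProperColoring G c}.Nonempty := by
  refine ⟨Fintype.card V, fun v => (Fintype.equivFin V v : ℕ), fun v => (Fintype.equivFin V v).2,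
    fun u w huw h => ?_⟩
  have : u = w := (Fintype.equivFin V).injective (Fin.ext h)
  exact G.loopless.irrefl u (this ▸ huw)

lemma omega_le_chrom {V : Type*} [Fintype V] (G : SimpleGraph V) :
    cliqueNumber G ≤ chromNumber G := by
  have hk : chromNumber G ∈ {k | ∃ c : V → ℕ, (∀ v, c v < k) ∧ IsProperColoring G c} :=
    Nat.sInf_mem (chrom_set_nonempty G)
  obtain ⟨c, hb, hp⟩ := hk
  refine csSup_le ⟨0, omega_nonempty G⟩ ?_
  rintro n ⟨s, hs⟩
  classical
  have hinj : Set.InjOn c s := by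
    intro a ha b hb' hab
    by_contra hne
    exact hp a b (hs.isClique ha hb' hne) hab
  calc n = (s.image c).card := by rw [Finset.card_image_of_injOn hinj, hs.card_eq]
    _ ≤ (Finset.range (chromNumber G)).card := by
        apply Finset.card_le_card
        intro x hx
        simp only [Finset.mem_image] at hx
        obtain ⟨a, _, rfl⟩ := hx
        simpa using hb a
    _ = chromNumber G := by simp

lemma remap_missing {V : Type*} (G : SimpleGraph V) {c : V → ℕ} {k i : ℕ}
    (hp : IsProperColoring G c) (hb : ∀ v, c v < k) (hi : ∀ v, c v ≠ i) (hik : i < k) :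
    ∃ c', (∀ v, c' v < k - 1) ∧ IsProperColoring G c' := by
  classical
  refine ⟨fun v => if c v < i then c v else c v - 1, fun v => ?_, fun u w huw h => ?_⟩
  · have h1 := hb v
    have h2 := hi v
    show (if c v < i then c v else c v - 1) < k - 1
    split_ifs <;> omega
  · have h1 := hp u w huw
    have h2 := hi u
    have h3 := hi w
    have h' : (if c u < i then c u else c u - 1) = (if c w < i then c w else c w - 1) := h
    split_ifs at h' <;> omega

lemma chrom_le_psi {V : Type*} [Fintype V] (G : SimpleGraph V) :
    chromNumber G ≤ pseudoachromaticNumber G := by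
  classical
  set k := chromNumber G with hkdef
  have hk : k ∈ {k | ∃ c : V → ℕ, (∀ v, c v < k) ∧ IsProperColoring G c} :=
    Nat.sInf_mem (chrom_set_nonempty G)
  obtain ⟨c, hb, hp⟩ := hk
  have hno_missing : ∀ (c' : V → ℕ), (∀ v, c' v < k) → IsProperColoring G c' →
      ∀ i, i < k → ∃ v, c' v = i := by
    intro c' hb' hp' i hik
    by_contra hmiss
    push_neg at hmiss
    obtain ⟨c'', hb'', hp''⟩ := remap_missing G hp' hb' hmiss hik
    have : k ≤ k - 1 := Nat.sInf_le ⟨c'', hb'', hp''⟩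
    omega
  have hcomplete : ∀ i j, i < k → j < k → i ≠ j → ∃ u w, G.Adj u w ∧ c u = i ∧ c w = j := by
    intro i j hik hjk hij
    by_contra hedge
    push_neg at hedge
    set c2 : V → ℕ := fun v => if c v = j then i else c v with hc2
    have hb2 : ∀ v, c2 v < k := by
      intro v
      simp only [hc2]
      split_ifs <;> [exact hik; exact hb v]
    have hp2 : IsProperColoring G c2 := by
      intro u w huw h
      have h1 := hp u w huw
      by_cases h2 : c u = j <;> by_cases h3 : c w = j <;>
        simp only [hc2, h2, h3, if_pos, if_neg, if_true, if_false] at h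
      · exact h1 (h2.trans h3.symm)
      · exact hedge w u huw.symm h.symm h2
      · exact hedge u w huw h h3
      · exact h1 h
    have hmiss2 : ∀ v, c2 v ≠ j := by
      intro v
      simp only [hc2]
      split_ifs with h2
      · exact hij
      · exact h2
    obtain ⟨c'', hb'', hp''⟩ := remap_missing G hp2 hb2 hmiss2 hjk
    have : k ≤ k - 1 := Nat.sInf_le ⟨c'', hb'', hp''⟩
    omega
  exact le_csSup (psi_bddAbove G) ⟨c, hb, hno_missing c hb hp, hcomplete⟩

/-- The closed neighborhood. -/
def closedNbhd {V : Type*} (G : SimpleGraph V) (v : V) : Set V := {u | G.Adj u v ∨ u = v}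

/-- Every edge has nested closed neighborhoods. -/
def Nested {V : Type*} (G : SimpleGraph V) : Prop :=
  ∀ u w, G.Adj u w → closedNbhd G u ⊆ closedNbhd G w ∨ closedNbhd G w ⊆ closedNbhd G u

lemma nested_induce {V : Type*} {G : SimpleGraph V} (h : Nested G) (s : Set V) :
    Nested (G.induce s) := by
  intro u w huw
  have huw' : G.Adj ↑u ↑w := huw
  rcases h u w huw' with hsub | hsub
  · left
    intro z hz
    have : (z : V) ∈ closedNbhd G ↑u := by
      rcases hz with hz | hz
      · exact Or.inl hz
      · exact Or.inr (by rw [hz])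
    rcases hsub this with h1 | h1
    · exact Or.inl h1
    · exact Or.inr (Subtype.ext h1)
  · right
    intro z hz
    have : (z : V) ∈ closedNbhd G ↑w := by
      rcases hz with hz | hz
      · exact Or.inl hz
      · exact Or.inr (by rw [hz])
    rcases hsub this with h1 | h1
    · exact Or.inl h1
    · exact Or.inr (Subtype.ext h1)

/-- Core configuration lemma: a `χψ`-perfect graph contains no induced `P₄` or `C₄`-like
configuration. -/
lemma chiPsi_quad {V : Type*} [Fintype V] {G : SimpleGraph V} (hG : ChiPsiPerfect G)
    {a b c d : V} (hab : G.Adj a b) (hbc : G.Adj b c) (hcd : G.Adj c d)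
    (hac : ¬G.Adj a c) (hbd : ¬G.Adj b d) (hanec : a ≠ c) (hbned : b ≠ d) (haned : a ≠ d) :
    False := by
  classical
  set t : Set V := {a, b, c, d} with ht
  letI : Fintype ↥t := Fintype.ofFinite _
  have hat : a ∈ t := by simp [ht]
  have hbt : b ∈ t := by simp [ht]
  have hct : c ∈ t := by simp [ht]
  have hdt : d ∈ t := by simp [ht]
  have hbnec : b ≠ c := G.ne_of_adj hbc
  have hcned : c ≠ d := G.ne_of_adj hcd
  have haneb : a ≠ b := G.ne_of_adj hab
  -- chromatic number at most 2
  have hchrom : chromNumber (G.induce t) ≤ 2 := by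
    apply Nat.sInf_le
    refine ⟨fun z => if (z : V) = b ∨ (z : V) = d then 0 else 1, fun v => ?_, ?_⟩
    · show (if (v : V) = b ∨ (v : V) = d then 0 else 1) < 2
      split_ifs <;> omega
    · intro z1 z2 hz heq
      have hz' : G.Adj ↑z1 ↑z2 := hz
      have h1 := z1.2
      have h2 := z2.2
      have hca : ¬G.Adj c a := fun h' => hac h'.symm
      have hdb : ¬G.Adj d b := fun h' => hbd h'.symm
      have hba := haneb.symm
      have hcb := hbnec.symm
      have hcna := hanec.symm
      have hdnb := hbned.symm
      have hdc := hcned.symm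
      have hdna := haned.symm
      simp only [ht, Set.mem_insert_iff, Set.mem_singleton_iff] at h1 h2
      rcases h1 with e | e | e | e <;> rcases h2 with f | f | f | f <;>
        first
          | exact G.loopless.irrefl _ (by rw [e, f] at hz'; exact hz')
          | exact hac (by rw [e, f] at hz'; exact hz')
          | exact hca (by rw [e, f] at hz'; exact hz')
          | exact hbd (by rw [e, f] at hz'; exact hz')
          | exact hdb (by rw [e, f] at hz'; exact hz')
          | (simp only [e, f] at heq;
             simp [haneb, hanec, haned, hbnec, hbned, hcned,
               hba, hcb, hcna, hdnb, hdc, hdna] at heq)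
  -- pseudoachromatic number at least 3
  have hpsi : 3 ≤ pseudoachromaticNumber (G.induce t) := by
    apply le_csSup (psi_bddAbove _)
    refine ⟨fun z => if (z : V) = b then 0 else if (z : V) = c then 1 else 2,
      fun v => ?_, ?_, ?_⟩
    · show (if (v : V) = b then 0 else if (v : V) = c then 1 else 2) < 3
      split_ifs <;> omega
    · intro i hi
      interval_cases i
      · exact ⟨⟨b, hbt⟩, by simp⟩
      · exact ⟨⟨c, hct⟩, by simp [hbnec.symm]⟩
      · exact ⟨⟨a, hat⟩, by simp [haneb, hanec]⟩
    · intro i j hi hj hij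
      have cb : (fun z : ↥t => if (z : V) = b then 0 else if (z : V) = c then 1 else 2) ⟨b, hbt⟩
          = 0 := by simp
      have cc : (fun z : ↥t => if (z : V) = b then 0 else if (z : V) = c then 1 else 2) ⟨c, hct⟩
          = 1 := by simp [hbnec.symm]
      have ca : (fun z : ↥t => if (z : V) = b then 0 else if (z : V) = c then 1 else 2) ⟨a, hat⟩
          = 2 := by simp [haneb, hanec]
      have cd' : (fun z : ↥t => if (z : V) = b then 0 else if (z : V) = c then 1 else 2) ⟨d, hdt⟩
          = 2 := by simp [hbned.symm, hcned.symm]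
      have eab : (G.induce t).Adj ⟨a, hat⟩ ⟨b, hbt⟩ := hab
      have ebc : (G.induce t).Adj ⟨b, hbt⟩ ⟨c, hct⟩ := hbc
      have ecd : (G.induce t).Adj ⟨c, hct⟩ ⟨d, hdt⟩ := hcd
      interval_cases i <;> interval_cases j <;> first
        | exact absurd rfl hij
        | exact ⟨_, _, ebc, cb, cc⟩
        | exact ⟨_, _, ebc.symm, cc, cb⟩
        | exact ⟨_, _, eab.symm, cb, ca⟩
        | exact ⟨_, _, eab, ca, cb⟩
        | exact ⟨_, _, ecd, cc, cd'⟩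
        | exact ⟨_, _, ecd.symm, cd', cc⟩
  have := hG t
  omega

lemma chiPsi_nested {V : Type*} [Fintype V] {G : SimpleGraph V} (hG : ChiPsiPerfect G)
    (s : Set V) : Nested (G.induce s) := by
  intro u w huw
  by_contra hcon
  push_neg at hcon
  obtain ⟨x, hxu, hxw⟩ := Set.not_subset.mp hcon.1
  obtain ⟨y, hyw, hyu⟩ := Set.not_subset.mp hcon.2
  have huw' : G.Adj ↑u ↑w := huw
  -- x ≠ u, since u ∈ closedNbhd w
  have hxnu : x ≠ u := by
    rintro rfl
    exact hxw (Or.inl huw)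
  have hynw : y ≠ w := by
    rintro rfl
    exact hyu (Or.inl huw.symm)
  have hxu' : G.Adj ↑x ↑u := by
    rcases hxu with h | h
    · exact h
    · exact absurd h hxnu
  have hyw' : G.Adj ↑y ↑w := by
    rcases hyw with h | h
    · exact h
    · exact absurd h hynw
  have hnxw : ¬G.Adj ↑x ↑w := fun h => hxw (Or.inl h)
  have hnyu : ¬G.Adj ↑y ↑u := fun h => hyu (Or.inl h)
  have hxnw : x ≠ w := fun h => hxw (Or.inr h)
  have hynu : y ≠ u := fun h => hyu (Or.inr h)
  have hxny : x ≠ y := by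
    rintro rfl
    exact hxw (Or.inl hyw')
  exact chiPsi_quad hG hxu' huw' hyw'.symm hnxw (fun h => hnyu h.symm)
    (fun h => hxnw (Subtype.ext h)) (fun h => hynu (Subtype.ext h).symm)
    (fun h => hxny (Subtype.ext h))

lemma clique_induce_le {V : Type*} [Fintype V] (G : SimpleGraph V) (s : Set V) :
    cliqueNumber (G.induce s) ≤ cliqueNumber G := by
  classical
  refine csSup_le ⟨0, omega_nonempty _⟩ ?_
  rintro n ⟨t, ht⟩
  apply le_csSup (omega_bddAbove G)
  refine ⟨t.map (Function.Embedding.subtype _), ?_, ?_⟩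
  · intro p hp q hq hpq
    simp only [Finset.coe_map, Set.mem_image, Finset.mem_coe] at hp hq
    obtain ⟨p', hp', rfl⟩ := hp
    obtain ⟨q', hq', rfl⟩ := hq
    have : p' ≠ q' := fun h => hpq (by rw [h])
    exact ht.isClique hp' hq' this
  · rw [Finset.card_map, ht.card_eq]

/-- Main lemma: a graph in which every edge has nested closed neighborhoods can be properly
colored with `cliqueNumber` colors. -/
lemma nested_good_coloring : ∀ (n : ℕ) (V : Type u) [Fintype V] (G : SimpleGraph V),
    Fintype.card V ≤ n → Nested G →
    ∃ c : V → ℕ, IsProperColoring G c ∧ ∀ v, c v < cliqueNumber G := by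
  intro n
  induction n with
  | zero =>
    intro V _ G hcard _
    have : IsEmpty V := Fintype.card_eq_zero_iff.mp (le_antisymm hcard (Nat.zero_le _))
    exact ⟨fun _ => 0, fun u => isEmptyElim u, fun v => isEmptyElim v⟩
  | succ n ih =>
    intro V _ G hcard hnest
    classical
    rcases isEmpty_or_nonempty V with hV | hV
    · exact ⟨fun _ => 0, fun u => isEmptyElim u, fun v => isEmptyElim v⟩
    set Nb : V → Finset V := fun v => Finset.univ.filter (fun u => G.Adj u v ∨ u = v) with hNb
    have hNbmem : ∀ u v, u ∈ Nb v ↔ (G.Adj u v ∨ u = v) := by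
      intro u v
      simp [hNb]
    obtain ⟨v, -, hmin⟩ := Finset.exists_min_image Finset.univ (fun v => (Nb v).card)
      ⟨Classical.arbitrary V, Finset.mem_univ _⟩
    -- Nb v is a clique
    have hclique : G.IsNClique (Nb v).card (Nb v) := by
      refine ⟨?_, rfl⟩
      intro p hp q hq hpq
      simp only [Finset.mem_coe, hNbmem] at hp hq
      rcases hp with hp | hp
      · rcases hq with hq | hq
        · -- both neighbors of v
          rcases hnest p v hp with hsub | hsub
          · -- closedNbhd p ⊆ closedNbhd v : use minimality to get equality
            have hsub' : Nb p ⊆ Nb v := by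
              intro z hz
              rw [hNbmem] at hz ⊢
              exact hsub hz
            have hcard' : (Nb v).card ≤ (Nb p).card := hmin p (Finset.mem_univ _)
            have heq : Nb p = Nb v := Finset.eq_of_subset_of_card_le hsub' hcard'
            have : q ∈ Nb p := by rw [heq, hNbmem]; exact Or.inl hq
            rw [hNbmem] at this
            rcases this with h | h
            · exact h.symm
            · exact absurd h.symm hpq
          · -- closedNbhd v ⊆ closedNbhd p
            have : q ∈ closedNbhd G p := hsub (Or.inl hq)
            rcases this with h | h
            · exact h.symm
            · exact absurd h.symm hpq
        · -- q = v
          rw [hq]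
          exact hp
      · -- p = v
        rcases hq with hq | hq
        · rw [hp]
          exact hq.symm
        · exact absurd (hp.trans hq.symm) hpq
    have hvNb : v ∈ Nb v := (hNbmem v v).mpr (Or.inr rfl)
    have homega : (Nb v).card ≤ cliqueNumber G := le_csSup (omega_bddAbove G) ⟨Nb v, hclique⟩
    have homega_pos : 1 ≤ cliqueNumber G :=
      le_trans (Finset.card_pos.mpr ⟨v, hvNb⟩) homega
    -- induct on V minus v
    set s : Set V := {u | u ≠ v} with hs
    letI : Fintype ↥s := Fintype.ofFinite _
    have hcard' : Fintype.card ↥s ≤ n := by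
      have : Fintype.card ↥s < Fintype.card V :=
        Fintype.card_lt_of_injective_of_notMem (Subtype.val) Subtype.val_injective
          (b := v) (by simp [hs])
      omega
    obtain ⟨c', hp', hb'⟩ := ih ↥s (G.induce s) hcard' (nested_induce hnest s)
    have hb'' : ∀ z, c' z < cliqueNumber G :=
      fun z => lt_of_lt_of_le (hb' z) (clique_induce_le G s)
    -- colors used on neighbors of v
    set F : Finset ℕ :=
      (Finset.univ.filter (fun z : ↥s => G.Adj ↑z v)).image c' with hF
    have hFcard : F.card ≤ cliqueNumber G - 1 := by
      have h1 : F.card ≤ (Finset.univ.filter (fun z : ↥s => G.Adj ↑z v)).card :=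
        Finset.card_image_le
      have h2 : (Finset.univ.filter (fun z : ↥s => G.Adj ↑z v)).card ≤ ((Nb v).erase v).card := by
        apply Finset.card_le_card_of_injOn Subtype.val
        · intro z hz
          simp only [Finset.coe_filter, Finset.mem_coe, Finset.mem_filter, Finset.mem_univ, true_and, Set.mem_setOf_eq] at hz
          apply Finset.mem_erase.mpr
          exact ⟨z.2, (hNbmem _ _).mpr (Or.inl hz)⟩
        · exact fun p _ q _ hpq => Subtype.val_injective hpq
      have h3 : ((Nb v).erase v).card = (Nb v).card - 1 := Finset.card_erase_of_mem hvNb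
      omega
    have hex : ¬ Finset.range (cliqueNumber G) ⊆ F := by
      intro hsub
      have := Finset.card_le_card hsub
      rw [Finset.card_range] at this
      omega
    obtain ⟨m, hmrange, hmF⟩ := Finset.not_subset.mp hex
    rw [Finset.mem_range] at hmrange
    refine ⟨fun x => if h : x = v then m else c' ⟨x, h⟩, ?_, ?_⟩
    · intro p q hpq heq
      by_cases hp : p = v <;> by_cases hq : q = v
      · rw [hp, hq] at hpq
        exact G.loopless.irrefl v hpq
      · simp only [hp, dif_pos, dif_neg hq] at heq
        apply hmF
        rw [hF]
        apply Finset.mem_image.mpr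
        refine ⟨⟨q, hq⟩, Finset.mem_filter.mpr ⟨Finset.mem_univ _, ?_⟩, heq.symm⟩
        rw [hp] at hpq
        exact hpq.symm
      · simp only [hq, dif_pos, dif_neg hp] at heq
        apply hmF
        rw [hF]
        apply Finset.mem_image.mpr
        refine ⟨⟨p, hp⟩, Finset.mem_filter.mpr ⟨Finset.mem_univ _, ?_⟩, heq⟩
        rw [hq] at hpq
        exact hpq
      · simp only [dif_neg hp, dif_neg hq] at heq
        exact hp' ⟨p, hp⟩ ⟨q, hq⟩ hpq heq
    · intro x
      by_cases hx : x = v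
      · simpa [hx] using hmrange
      · simpa [hx] using hb'' ⟨x, hx⟩

lemma nested_chrom_le_omega {V : Type*} [Fintype V] {G : SimpleGraph V} (h : Nested G) :
    chromNumber G ≤ cliqueNumber G := by
  obtain ⟨c, hp, hb⟩ := nested_good_coloring (Fintype.card V) V G le_rfl h
  exact Nat.sInf_le ⟨c, hb, hp⟩

end Aux

theorem stmt_18 {V : Type*} [Fintype V] (G : SimpleGraph V) :
    OmegaPsiPerfect G ↔ ChiPsiPerfect G := by
  classical
  constructor
  · intro h s
    letI : Fintype ↥s := Fintype.ofFinite _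
    have h1 := h s
    have h2 := omega_le_chrom (G.induce s)
    have h3 := chrom_le_psi (G.induce s)
    omega
  · intro h s
    letI : Fintype ↥s := Fintype.ofFinite _
    have h1 := h s
    have h2 := omega_le_chrom (G.induce s)
    have h3 := nested_chrom_le_omega (chiPsi_nested h s)
    have h4 := chrom_le_psi (G.induce s)
    omega
end
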